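/- arXiv:1110.3802 — 2 statements merged into one kernel-verified Lean document; each statement's English description precedes it below -/
import Mathlib

section
/- Let f^{(n)} be a non-degenerate eigenvector of H(G) corresponding to λ_n(G), let P be its nodal partition (the ν_n-partition of G whose removed edges are exactly the edges (i,j) with f^{(n)}_i f^{(n)}_j < 0), and for each removed edge e = (i,j) with i < j set α^c_e = f^{(n)}_j / f^{(n)}_i (which is negative). Then for every component P_k the restriction of f^{(n)} to P_k is an eigenvector of the block H(P_k;α^c) whose eigenvalue is the lowest eigenvalue λ_1(P_k;α^c), and λ_1(P_k;α^c) = λ_n(G) for all k. In particular (P,α^c) is an equipartition with equipartition energy λ_n(G). -/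
open Matrix

open Classical in
/-- The discrete Schrödinger operator (Hamiltonian) `H(G) = -A(G) + Q` on the graph `G`
with potential `q`, given entrywise: `q a` on the diagonal, `-1` on adjacent pairs of
vertices, and `0` otherwise. -/
noncomputable def Ham {V : ℕ} (G : SimpleGraph (Fin V)) (q : Fin V → ℝ) :
    Matrix (Fin V) (Fin V) ℝ :=
  Matrix.of fun a b => if a = b then q a else if G.Adj a b then -1 else 0

/-- The perturbation matrix `B(i,j;α)`: its only (potentially) nonzero entries are
`B i i = -α`, `B j j = -1/α` and `B i j = B j i = 1`. -/
noncomputable def Bmat {V : ℕ} (i j : Fin V) (α : ℝ) : Matrix (Fin V) (Fin V) ℝ :=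
  Matrix.of fun a b =>
    (if a = i ∧ b = i then -α else 0) + (if a = j ∧ b = j then -1/α else 0) +
      (if (a = i ∧ b = j) ∨ (a = j ∧ b = i) then 1 else 0)

lemma Ham_isHermitian {V : ℕ} (G : SimpleGraph (Fin V)) (q : Fin V → ℝ) :
    (Ham G q).IsHermitian := by
  classical
  unfold Matrix.IsHermitian
  ext a b
  simp only [Matrix.conjTranspose_apply, Ham, Matrix.of_apply, star_trivial]
  by_cases h : a = b
  · subst h; simp
  · simp [h, Ne.symm h, SimpleGraph.adj_comm]

lemma Bmat_isHermitian {V : ℕ} (i j : Fin V) (α : ℝ) : (Bmat i j α).IsHermitian := by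
  unfold Matrix.IsHermitian
  ext a b
  simp only [Matrix.conjTranspose_apply, Bmat, Matrix.of_apply, star_trivial]
  by_cases hai : a = i <;> by_cases haj : a = j <;> by_cases hbi : b = i <;>
    by_cases hbj : b = j <;> simp [hai, haj, hbi, hbj]

/-- The eigenvalues of a Hermitian matrix, sorted in nondecreasing order and
counted with multiplicity; `sortedEigs hM k` is the `(k+1)`-st smallest eigenvalue. -/
noncomputable def sortedEigs {n : ℕ} {M : Matrix (Fin n) (Fin n) ℝ} (hM : M.IsHermitian) :
    Fin n → ℝ :=
  hM.eigenvalues ∘ Tuple.sort hM.eigenvalues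

open Classical in
/-- The restriction of `f : Fin V → ℝ` to the connected component `c` of the graph `H`,
extended by zero to the other components. -/
noncomputable def restrictComp {V : ℕ} (H : SimpleGraph (Fin V)) (c : H.ConnectedComponent)
    (f : Fin V → ℝ) : Fin V → ℝ :=
  fun v => if H.connectedComponentMk v = c then f v else 0

/-- The lowest eigenvalue `λ₁(P_k;α)` of the block of the (Hermitian) matrix `M`
corresponding to the connected component `c` of the graph `H`, i.e. of the principal
submatrix of `M` indexed by the vertices of `c`. -/
noncomputable def lam1Block {V : ℕ} {M : Matrix (Fin V) (Fin V) ℝ} (hM : M.IsHermitian)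
    (H : SimpleGraph (Fin V)) (c : H.ConnectedComponent) : ℝ :=
  letI : Fintype {v : Fin V // H.connectedComponentMk v = c} := Fintype.ofFinite _
  letI : DecidableEq {v : Fin V // H.connectedComponentMk v = c} := Classical.decEq _
  ⨅ w : {v : Fin V // H.connectedComponentMk v = c},
    (hM.submatrix (Subtype.val : {v : Fin V // H.connectedComponentMk v = c} → Fin V)).eigenvalues w

open Finset in
lemma eig_le_of_pos_eigenvector {n : Type*} [Fintype n] [DecidableEq n] [Nonempty n]
    {M : Matrix n n ℝ} (hoff : ∀ i j : n, i ≠ j → M i j ≤ 0)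
    {g : n → ℝ} (hg : ∀ i, 0 < g i) {μ : ℝ} (hMg : M *ᵥ g = μ • g)
    {h : n → ℝ} (hh : h ≠ 0) {ν : ℝ} (hMh : M *ᵥ h = ν • h) : μ ≤ ν := by
  classical
  obtain ⟨m, -, hm⟩ := Finset.exists_max_image Finset.univ (fun x => |h x| / g x)
    ⟨Classical.arbitrary n, Finset.mem_univ _⟩
  have hm' : ∀ x, |h x| / g x ≤ |h m| / g m := fun x => hm x (Finset.mem_univ x)
  set h' : n → ℝ := if 0 ≤ h m then h else -h with hh'
  have hMh' : M *ᵥ h' = ν • h' := by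
    rw [hh']; split_ifs with hs
    · exact hMh
    · rw [Matrix.mulVec_neg, hMh, smul_neg]
  have habs : ∀ x, |h' x| = |h x| := by
    intro x; rw [hh']; split_ifs <;> simp
  have habsm : 0 < |h m| := by
    obtain ⟨x, hx⟩ := Function.ne_iff.mp hh
    have hx' : 0 < |h x| / g x := div_pos (abs_pos.mpr hx) (hg x)
    have h2 : 0 < |h m| / g m := lt_of_lt_of_le hx' (hm' x)
    have h3 := mul_pos h2 (hg m)
    rwa [div_mul_cancel₀ _ (ne_of_gt (hg m))] at h3
  have hm0 : 0 < h' m := by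
    rw [hh']; split_ifs with hs
    · rwa [abs_of_nonneg hs] at habsm
    · rw [abs_of_neg (lt_of_not_ge hs)] at habsm; simpa using habsm
  set t : ℝ := h' m / g m with ht
  have hbound : ∀ u, h' u ≤ t * g u := by
    intro u
    have h1 : h' u ≤ |h' u| := le_abs_self _
    have h2 : |h u| / g u ≤ |h m| / g m := hm' u
    have h3 : |h u| ≤ (|h m| / g m) * g u := (div_le_iff₀ (hg u)).mp h2
    have h4 : t = |h m| / g m := by
      rw [ht]; congr 1
      rw [hh']; split_ifs with hs
      · exact (abs_of_nonneg hs).symm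
      · rw [abs_of_neg (lt_of_not_ge hs)]; simp
    rw [h4]; calc h' u ≤ |h' u| := h1
      _ = |h u| := habs u
      _ ≤ _ := h3
  -- main estimate
  have hgm : (M *ᵥ g) m = μ * g m := by rw [hMg]; simp
  have hhm : (M *ᵥ h') m = ν * h' m := by rw [hMh']; simp
  have hexp : ∀ (x : n → ℝ), (M *ᵥ x) m = M m m * x m + ∑ u ∈ Finset.univ.erase m, M m u * x u := by
    intro x
    rw [Matrix.mulVec, dotProduct]
    exact (Finset.add_sum_erase Finset.univ (fun u => M m u * x u) (Finset.mem_univ m)).symm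
  have hsum : ∑ u ∈ Finset.univ.erase m, M m u * h' u ≥ ∑ u ∈ Finset.univ.erase m, M m u * (t * g u) := by
    apply Finset.sum_le_sum
    intro u hu
    have hne : m ≠ u := (Finset.ne_of_mem_erase hu).symm
    exact mul_le_mul_of_nonpos_left (hbound u) (hoff m u hne)
  have e1 : ν * h' m = M m m * h' m + ∑ u ∈ Finset.univ.erase m, M m u * h' u := by
    rw [← hhm, hexp]
  have e2 : μ * g m = M m m * g m + ∑ u ∈ Finset.univ.erase m, M m u * g u := by
    rw [← hgm, hexp]
  have e3 : ∑ u ∈ Finset.univ.erase m, M m u * (t * g u) = t * ∑ u ∈ Finset.univ.erase m, M m u * g u := by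
    rw [Finset.mul_sum]; apply Finset.sum_congr rfl; intro u _; ring
  have htg : t * g m = h' m := div_mul_cancel₀ _ (ne_of_gt (hg m))
  have e2' : ∑ u ∈ Finset.univ.erase m, M m u * g u = μ * g m - M m m * g m := by linarith [e2]
  have key : ν * h' m ≥ μ * h' m := by
    calc ν * h' m = M m m * h' m + ∑ u ∈ Finset.univ.erase m, M m u * h' u := e1
      _ ≥ M m m * h' m + ∑ u ∈ Finset.univ.erase m, M m u * (t * g u) := by linarith [hsum]
      _ = M m m * h' m + t * (μ * g m - M m m * g m) := by rw [e3, e2']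
      _ = M m m * h' m + μ * (t * g m) - M m m * (t * g m) := by ring
      _ = μ * h' m := by rw [htg]; ring
  exact le_of_mul_le_mul_right (by linarith) hm0

open Finset in
lemma iInf_eigenvalues_eq {n : Type*} [Fintype n] [DecidableEq n] [Nonempty n]
    {M : Matrix n n ℝ} (hM : M.IsHermitian) (hoff : ∀ i j : n, i ≠ j → M i j ≤ 0)
    {g : n → ℝ} (hg : ∀ i, 0 < g i) {μ : ℝ} (hMg : M *ᵥ g = μ • g) :
    ⨅ i, hM.eigenvalues i = μ := by
  classical
  have hle : ∀ i, μ ≤ hM.eigenvalues i := by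
    intro i
    exact eig_le_of_pos_eigenvector hoff hg hMg
      (fun h0 => hM.eigenvectorBasis.orthonormal.ne_zero i (by ext u; exact congrFun h0 u))
        (hM.mulVec_eigenvectorBasis i)
  -- existence of attaining index
  have hsymm : ∀ a b : n, M a b = M b a := by
    intro a b
    have := congrFun (congrFun hM b) a
    simpa [Matrix.conjTranspose_apply] using this
  have hex : ∃ i, hM.eigenvalues i = μ := by
    by_contra hno
    push_neg at hno
    -- then g is orthogonal to all eigenvectors, so g = 0
    have hdot : ∀ i, ∑ u, (hM.eigenvectorBasis i : n → ℝ) u * g u = 0 := by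
      intro i
      set v : n → ℝ := (hM.eigenvectorBasis i : n → ℝ) with hv
      have hMv : M *ᵥ v = hM.eigenvalues i • v := hM.mulVec_eigenvectorBasis i
      have hcalc : hM.eigenvalues i * ∑ u, v u * g u = μ * ∑ u, v u * g u := by
        have lhs1 : ∑ u, (M *ᵥ v) u * g u = hM.eigenvalues i * ∑ u, v u * g u := by
          rw [hMv, Finset.mul_sum]
          apply Finset.sum_congr rfl; intro u _; simp [mul_assoc]
        have lhs2 : ∑ u, (M *ᵥ v) u * g u = μ * ∑ u, v u * g u := by
          have swap : ∑ u, (M *ᵥ v) u * g u = ∑ x, v x * (M *ᵥ g) x := by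
            simp only [Matrix.mulVec, dotProduct, Finset.sum_mul, Finset.mul_sum]
            rw [Finset.sum_comm]
            apply Finset.sum_congr rfl; intro x _
            apply Finset.sum_congr rfl; intro u _
            rw [hsymm x u]; ring
          rw [swap, hMg, Finset.mul_sum]
          apply Finset.sum_congr rfl; intro u _; simp; ring
        rw [← lhs1, lhs2]
      have hzero : (hM.eigenvalues i - μ) * ∑ u, v u * g u = 0 := by linarith [hcalc]
      rcases mul_eq_zero.mp hzero with h1 | h2
      · exact absurd (by linarith : hM.eigenvalues i = μ) (hno i)
      · exact h2
    -- conclude g = 0 via orthonormal basis expansion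
    set g' : EuclideanSpace ℝ n := (WithLp.equiv 2 (n → ℝ)).symm g with hg'
    have hg'app : ∀ u, g' u = g u := fun u => rfl
    have hg0 : g' = 0 := by
      have hrepr := hM.eigenvectorBasis.sum_repr' g'
      rw [← hrepr]
      apply Finset.sum_eq_zero
      intro i _
      have hinner : (inner ℝ (hM.eigenvectorBasis i) g' : ℝ) = 0 := by
        rw [PiLp.inner_apply]
        simp only [RCLike.inner_apply, starRingEnd_apply, star_trivial]
        simpa [hg'app, mul_comm] using hdot i
      rw [hinner, zero_smul]
    have hzz : g (Classical.arbitrary n) = 0 := by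
      have := congrArg (fun x : EuclideanSpace ℝ n => x (Classical.arbitrary n)) hg0
      rwa [hg'app] at this
    exact absurd hzz (ne_of_gt (hg (Classical.arbitrary n)))
  obtain ⟨i, hi⟩ := hex
  refine le_antisymm ?_ (le_ciInf hle)
  calc ⨅ j, hM.eigenvalues j ≤ hM.eigenvalues i :=
        ciInf_le (Set.Finite.bddBelow (Set.finite_range _)) i
    _ = μ := hi

lemma lam1Block_eq {V : ℕ} {M : Matrix (Fin V) (Fin V) ℝ} (hM : M.IsHermitian)
    (H : SimpleGraph (Fin V)) (c : H.ConnectedComponent)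
    (hoff : ∀ i j : Fin V, i ≠ j → M i j ≤ 0) (μ : ℝ) (g : Fin V → ℝ)
    (hgpos : ∀ v, H.connectedComponentMk v = c → 0 < g v)
    (hgzero : ∀ v, H.connectedComponentMk v ≠ c → g v = 0)
    (hMg : M *ᵥ g = μ • g) :
    lam1Block hM H c = μ := by
  classical
  obtain ⟨v0, hv0⟩ := c.exists_rep
  letI F : Fintype {v : Fin V // H.connectedComponentMk v = c} := Fintype.ofFinite _
  haveI : Nonempty {v : Fin V // H.connectedComponentMk v = c} := ⟨⟨v0, hv0⟩⟩
  unfold lam1Block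
  refine @iInf_eigenvalues_eq {v : Fin V // H.connectedComponentMk v = c}
    (Fintype.ofFinite _) (Classical.decEq _) ⟨⟨v0, hv0⟩⟩ _ (hM.submatrix _)
    ?_ (fun u => g u.1) ?_ μ ?_
  · intro i j hij
    have : (i : Fin V) ≠ (j : Fin V) := fun h => hij (Subtype.ext h)
    exact hoff _ _ this
  · exact fun w => hgpos w.1 w.2
  · -- eigen equation for the submatrix
    funext w
    have hfull := congrFun hMg w.1
    have hsplit : ∑ u : Fin V, M w.1 u * g u =
        ∑ u ∈ Finset.univ.filter (fun u => H.connectedComponentMk u = c), M w.1 u * g u := by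
      rw [← Finset.sum_filter_add_sum_filter_not Finset.univ
        (fun u => H.connectedComponentMk u = c) (fun u => M w.1 u * g u)]
      have : ∑ u ∈ Finset.univ.filter (fun u => ¬ H.connectedComponentMk u = c),
          M w.1 u * g u = 0 := by
        apply Finset.sum_eq_zero
        intro u hu
        rw [hgzero u (Finset.mem_filter.mp hu).2, mul_zero]
      rw [this, add_zero]
    calc (M.submatrix Subtype.val Subtype.val *ᵥ fun u => g u.1) w
        = ∑ u : {v : Fin V // H.connectedComponentMk v = c}, M w.1 u.1 * g u.1 := by
          simp [Matrix.mulVec, dotProduct, Matrix.submatrix_apply]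
      _ = ∑ u ∈ Finset.univ.filter (fun u => H.connectedComponentMk u = c), M w.1 u * g u :=
          (Finset.sum_subtype (Finset.univ.filter (fun u => H.connectedComponentMk u = c))
            (fun x => by simp) (fun u => M w.1 u * g u)).symm
      _ = ∑ u : Fin V, M w.1 u * g u := hsplit.symm
      _ = μ * g w.1 := by
          rw [show ∑ u : Fin V, M w.1 u * g u = (M *ᵥ g) w.1 from rfl, hfull]; simp
      _ = (μ • fun u : {v : Fin V // H.connectedComponentMk v = c} => g u.1) w := by simp

lemma mulVec_point {V : ℕ} (M : Matrix (Fin V) (Fin V) ℝ) (x : Fin V → ℝ) (v : Fin V) :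
    (M *ᵥ x) v = M v v * x v + ∑ u ∈ Finset.univ.erase v, M v u * x u := by
  rw [Matrix.mulVec, dotProduct]
  exact (Finset.add_sum_erase _ _ (Finset.mem_univ v)).symm

lemma erase_sum_ite {V : ℕ} (v : Fin V) (p : Fin V → Prop) [DecidablePred p] (hpv : ¬ p v)
    (x : Fin V → ℝ) :
    ∑ u ∈ Finset.univ.erase v, (if p u then (-1:ℝ) else 0) * x u
      = -∑ u ∈ Finset.univ.filter p, x u := by
  classical
  have h1 : ∀ u, (if p u then (-1:ℝ) else 0) * x u = if p u then -x u else 0 := by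
    intro u; split_ifs <;> ring
  rw [Finset.sum_congr rfl (fun u _ => h1 u), ← Finset.sum_filter]
  have h2 : (Finset.univ.erase v).filter p = Finset.univ.filter p := by
    ext u
    simp only [Finset.mem_filter, Finset.mem_erase, Finset.mem_univ, true_and, and_true]
    constructor
    · rintro ⟨-, h⟩; exact h
    · intro h; exact ⟨fun he => hpv (he ▸ h), h⟩
  rw [h2, ← Finset.sum_neg_distrib]

/-- Let `f⁽ⁿ⁾` be a non-degenerate eigenvector of `H(G)` for `λ_n(G)`, let
`P` be its nodal partition (removed edges = sign-flip edges of `f⁽ⁿ⁾`), and for each removed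
edge `(i,j)`, `i < j`, set `α^c_e = f_j / f_i` (which is negative). Then the restriction of
`f⁽ⁿ⁾` to each component `P_k` is an eigenvector of the block of `H(P;α^c)` corresponding to
`P_k`, its eigenvalue is the lowest eigenvalue `λ₁(P_k;α^c)` of that block, and
`λ₁(P_k;α^c) = λ_n(G)` for every `k`; in particular `(P,α^c)` is an equipartition with
equipartition energy `λ_n(G)`. -/
theorem stmt_17 {V : ℕ} (G : SimpleGraph (Fin V)) (hG : G.Connected) (q : Fin V → ℝ)
    (f : Fin V → ℝ) (n : Fin V)
    (heig : Ham G q *ᵥ f = sortedEigs (Ham_isHermitian G q) n • f)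
    (hnz : ∀ v, f v ≠ 0)
    (hsimple : ∀ k : Fin V,
      sortedEigs (Ham_isHermitian G q) k = sortedEigs (Ham_isHermitian G q) n → k = n)
    (S : Finset (Fin V × Fin V))
    (hS : ∀ p : Fin V × Fin V, p ∈ S ↔ (G.Adj p.1 p.2 ∧ p.1 < p.2 ∧ f p.1 * f p.2 < 0))
    (P : SimpleGraph (Fin V)) (hPdef : P = G.deleteEdges ↑(S.image fun p => s(p.1, p.2)))
    (HP : Matrix (Fin V) (Fin V) ℝ)
    (hHPdef : HP = Ham G q + ∑ p ∈ S, Bmat p.1 p.2 (f p.2 / f p.1))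
    (hHP : HP.IsHermitian) :
    (∀ p ∈ S, f p.2 / f p.1 < 0) ∧
    (∀ c : P.ConnectedComponent,
      restrictComp P c f ≠ 0 ∧
      HP *ᵥ restrictComp P c f = sortedEigs (Ham_isHermitian G q) n • restrictComp P c f ∧
      lam1Block hHP P c = sortedEigs (Ham_isHermitian G q) n) := by
  classical
  set lam := sortedEigs (Ham_isHermitian G q) n with hlam
  have hS' : ∀ p ∈ S, G.Adj p.1 p.2 ∧ p.1 < p.2 ∧ f p.1 * f p.2 < 0 := fun p hp => (hS p).mp hp
  have halpha : ∀ p ∈ S, f p.2 / f p.1 < 0 := by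
    intro p hp
    obtain ⟨-, -, hneg⟩ := hS' p hp
    rcases mul_neg_iff.mp hneg with ⟨h1, h2⟩ | ⟨h1, h2⟩
    · exact div_neg_of_neg_of_pos h2 h1
    · exact div_neg_of_pos_of_neg h2 h1
  -- characterization of P adjacency
  have hPadj : ∀ v u, P.Adj v u ↔ G.Adj v u ∧ 0 < f v * f u := by
    intro v u
    rw [hPdef, SimpleGraph.deleteEdges_adj]
    constructor
    · rintro ⟨hadj, hmem⟩
      refine ⟨hadj, ?_⟩
      rcases lt_trichotomy (f v * f u) 0 with hlt | heq | hgt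
      · exfalso
        apply hmem
        simp only [Finset.coe_image, Set.mem_image, Finset.mem_coe]
        rcases lt_or_gt_of_ne hadj.ne with hvu | huv
        · exact ⟨(v, u), (hS _).mpr ⟨hadj, hvu, hlt⟩, rfl⟩
        · exact ⟨(u, v), (hS _).mpr ⟨hadj.symm, huv, by rw [mul_comm]; exact hlt⟩, Sym2.eq_swap⟩
      · exact absurd heq (mul_ne_zero (hnz v) (hnz u))
      · exact hgt
    · rintro ⟨hadj, hpos⟩
      refine ⟨hadj, ?_⟩
      intro hmem
      simp only [Finset.coe_image, Set.mem_image, Finset.mem_coe] at hmem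
      obtain ⟨p, hp, hpe⟩ := hmem
      obtain ⟨-, -, hneg⟩ := hS' p hp
      rw [Sym2.eq_iff] at hpe
      rcases hpe with ⟨h1, h2⟩ | ⟨h1, h2⟩
      · rw [h1, h2] at hneg; linarith
      · rw [h1, h2] at hneg; rw [mul_comm] at hneg; linarith
  -- constant sign on components
  have hsign : ∀ v u : Fin V, P.connectedComponentMk v = P.connectedComponentMk u →
      0 < f v * f u := by
    intro v u hcomp
    obtain ⟨w⟩ := SimpleGraph.ConnectedComponent.eq.mp hcomp
    induction w with
    | nil => exact mul_self_pos.mpr (hnz _)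
    | @cons a b d hadj w ih =>
      have h1 : 0 < f a * f b := ((hPadj a b).mp hadj).2
      have h2 : 0 < f b * f d := ih (SimpleGraph.ConnectedComponent.sound ⟨w⟩)
      nlinarith [mul_self_pos.mpr (hnz b)]
  -- off-diagonal entries of HP
  have hHPoff : ∀ v u : Fin V, v ≠ u → HP v u = if P.Adj v u then (-1:ℝ) else 0 := by
    intro v u hvu
    rw [hHPdef, Matrix.add_apply, Matrix.sum_apply]
    have hB : ∀ p ∈ S, Bmat p.1 p.2 (f p.2 / f p.1) v u
        = if (v = p.1 ∧ u = p.2) ∨ (v = p.2 ∧ u = p.1) then (1:ℝ) else 0 := by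
      intro p _
      simp only [Bmat, Matrix.of_apply]
      have h1 : ¬(v = p.1 ∧ u = p.1) := fun h => hvu (h.1.trans h.2.symm)
      have h2 : ¬(v = p.2 ∧ u = p.2) := fun h => hvu (h.1.trans h.2.symm)
      rw [if_neg h1, if_neg h2, zero_add, zero_add]
    rw [Finset.sum_congr rfl hB]
    by_cases hflip : G.Adj v u ∧ f v * f u < 0
    · have hPn : ¬ P.Adj v u := by
        rw [hPadj]; rintro ⟨-, hpos⟩; nlinarith [hflip.2]
      rw [if_neg hPn]
      have hHam : Ham G q v u = -1 := by simp [Ham, hvu, hflip.1]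
      set p0 : Fin V × Fin V := if v < u then (v, u) else (u, v) with hp0
      have hp0S : p0 ∈ S := by
        rw [hp0]; split_ifs with hlt
        · exact (hS _).mpr ⟨hflip.1, hlt, hflip.2⟩
        · exact (hS _).mpr ⟨hflip.1.symm, lt_of_le_of_ne (not_lt.mp hlt) (Ne.symm hvu),
            by rw [mul_comm]; exact hflip.2⟩
      have hsum : ∑ p ∈ S, (if (v = p.1 ∧ u = p.2) ∨ (v = p.2 ∧ u = p.1) then (1:ℝ) else 0)
          = 1 := by
        rw [Finset.sum_eq_single_of_mem p0 hp0S]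
        · rw [if_pos]
          rw [hp0]; split_ifs with hlt
          · exact Or.inl ⟨rfl, rfl⟩
          · exact Or.inr ⟨rfl, rfl⟩
        · intro p hp hpne
          rw [if_neg]
          have hlt2 : p.1 < p.2 := (hS' p hp).2.1
          rintro (⟨h1, h2⟩ | ⟨h1, h2⟩)
          · apply hpne
            have hvltu : v < u := by rw [h1, h2]; exact hlt2
            rw [hp0, if_pos hvltu]
            exact Prod.ext h1.symm h2.symm
          · apply hpne
            have hult : u < v := by rw [h1, h2]; exact hlt2
            rw [hp0, if_neg (asymm hult)]
            exact Prod.ext h2.symm h1.symm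
      rw [hsum, hHam]; ring
    · have hz : ∑ p ∈ S, (if (v = p.1 ∧ u = p.2) ∨ (v = p.2 ∧ u = p.1) then (1:ℝ) else 0)
          = 0 := by
        apply Finset.sum_eq_zero
        intro p hp
        rw [if_neg]
        obtain ⟨hadj, -, hneg⟩ := hS' p hp
        rintro (⟨h1, h2⟩ | ⟨h1, h2⟩)
        · exact hflip ⟨by rw [h1, h2]; exact hadj, by rw [h1, h2]; exact hneg⟩
        · exact hflip ⟨by rw [h1, h2]; exact hadj.symm, by rw [h1, h2, mul_comm]; exact hneg⟩
      rw [hz, add_zero]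
      by_cases hPa : P.Adj v u
      · rw [if_pos hPa]
        simp [Ham, hvu, ((hPadj v u).mp hPa).1]
      · rw [if_neg hPa]
        by_cases hGa : G.Adj v u
        · exfalso
          apply hflip
          refine ⟨hGa, ?_⟩
          rcases lt_trichotomy (f v * f u) 0 with h | h | h
          · exact h
          · exact absurd h (mul_ne_zero (hnz v) (hnz u))
          · exact absurd ((hPadj v u).mpr ⟨hGa, h⟩) hPa
        · simp [Ham, hvu, hGa]
  -- diagonal entries of HP (times f)
  have hdiag : ∀ v : Fin V, HP v v * f v
      = q v * f v - ∑ u ∈ Finset.univ.filter (fun u => G.Adj v u ∧ f v * f u < 0), f u := by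
    intro v
    rw [hHPdef, Matrix.add_apply, Matrix.sum_apply]
    have hHam : Ham G q v v = q v := by simp [Ham]
    have hBvv : ∀ p ∈ S, (Bmat p.1 p.2 (f p.2 / f p.1)) v v * f v
        = -(if v = p.1 then f p.2 else if v = p.2 then f p.1 else 0) := by
      intro p hp
      obtain ⟨hadj, hlt, hneg⟩ := hS' p hp
      have hne : p.1 ≠ p.2 := ne_of_lt hlt
      simp only [Bmat, Matrix.of_apply]
      by_cases h1 : v = p.1
      · have h2 : ¬ v = p.2 := fun h => hne (h1.symm.trans h)
        rw [if_pos ⟨h1, h1⟩, if_neg (fun h => h2 h.1),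
          if_neg (by rintro (⟨-, hb⟩ | ⟨ha, -⟩); exact hne (h1.symm.trans hb); exact h2 ha),
          if_pos h1, h1, add_zero, add_zero, neg_mul, div_mul_cancel₀ _ (hnz p.1)]
      · by_cases h2 : v = p.2
        · rw [if_neg (fun h => h1 h.1), if_pos ⟨h2, h2⟩,
            if_neg (by rintro (⟨ha, -⟩ | ⟨-, hb⟩); exact h1 ha; exact h1 hb),
            if_neg h1, if_pos h2, h2, zero_add, add_zero]
          rw [neg_div, one_div_div, neg_mul, div_mul_cancel₀ _ (hnz p.2)]
        · rw [if_neg (fun h => h1 h.1), if_neg (fun h => h2 h.1),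
            if_neg (by rintro (⟨ha, -⟩ | ⟨hb, -⟩); exact h1 ha; exact h2 hb),
            if_neg h1, if_neg h2]
          ring
    rw [add_mul, Finset.sum_mul, hHam, Finset.sum_congr rfl hBvv, Finset.sum_neg_distrib,
      ← sub_eq_add_neg]
    congr 1
    -- bijection between S-terms and flip-neighbours of v
    have hside : ∀ p ∈ S,
        (if v = p.1 then f p.2 else if v = p.2 then f p.1 else 0) ≠ 0 →
        (v = p.1 ∨ v = p.2) := by
      intro p _ hne
      by_contra hcon
      push_neg at hcon
      rw [if_neg hcon.1, if_neg hcon.2] at hne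
      exact hne rfl
    rw [← Finset.sum_filter_of_ne hside]
    apply Finset.sum_nbij' (i := fun p => if v = p.1 then p.2 else p.1)
      (j := fun u => if v < u then (v, u) else (u, v))
    · intro p hp
      obtain ⟨hpS, hpv⟩ := Finset.mem_filter.mp hp
      obtain ⟨hadj, hlt, hneg⟩ := hS' p hpS
      rcases hpv with h1 | h2
      · subst h1
        rw [if_pos rfl]
        exact Finset.mem_filter.mpr ⟨Finset.mem_univ _, hadj, hneg⟩
      · subst h2
        rw [if_neg (fun h => (ne_of_lt hlt) h.symm)]
        exact Finset.mem_filter.mpr ⟨Finset.mem_univ _, hadj.symm, by rw [mul_comm]; exact hneg⟩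
    · intro u hu
      obtain ⟨-, hadj, hneg⟩ := Finset.mem_filter.mp hu
      have hvu : v ≠ u := hadj.ne
      split_ifs with hlt
      · exact Finset.mem_filter.mpr ⟨(hS _).mpr ⟨hadj, hlt, hneg⟩, Or.inl rfl⟩
      · exact Finset.mem_filter.mpr ⟨(hS _).mpr ⟨hadj.symm,
          lt_of_le_of_ne (not_lt.mp hlt) (Ne.symm hvu), by rw [mul_comm]; exact hneg⟩,
          Or.inr rfl⟩
    · intro p hp
      obtain ⟨hpS, hpv⟩ := Finset.mem_filter.mp hp
      obtain ⟨hadj, hlt, hneg⟩ := hS' p hpS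
      rcases hpv with h1 | h2
      · subst h1
        rw [if_pos rfl, if_pos hlt]
      · subst h2
        have hi : (if p.2 = p.1 then p.2 else p.1) = p.1 :=
          if_neg (fun h => (ne_of_lt hlt) h.symm)
        rw [hi, if_neg (asymm hlt)]
    · intro u hu
      obtain ⟨-, hadj, -⟩ := Finset.mem_filter.mp hu
      by_cases hlt : v < u
      · rw [if_pos hlt]; simp
      · rw [if_neg hlt]; simp [hadj.ne]
    · intro p hp
      obtain ⟨hpS, hpv⟩ := Finset.mem_filter.mp hp
      obtain ⟨hadj, hlt, hneg⟩ := hS' p hpS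
      rcases hpv with h1 | h2
      · subst h1
        rw [if_pos rfl, if_pos rfl]
      · subst h2
        have hne' : ¬ p.2 = p.1 := fun h => (ne_of_lt hlt) h.symm
        rw [if_neg hne', if_neg hne', if_pos rfl]
  -- expansion of the eigenvalue equation for f
  have hlamv : ∀ v : Fin V,
      q v * f v - ∑ u ∈ Finset.univ.filter (fun u => G.Adj v u), f u = lam * f v := by
    intro v
    have hv := congrFun heig v
    rw [mulVec_point] at hv
    have hHam : Ham G q v v = q v := by simp [Ham]
    have hcongr : ∀ u ∈ Finset.univ.erase v, Ham G q v u * f u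
        = (if G.Adj v u then (-1:ℝ) else 0) * f u := by
      intro u hu
      have hne : v ≠ u := (Finset.ne_of_mem_erase hu).symm
      simp [Ham, hne]
    rw [Finset.sum_congr rfl hcongr, erase_sum_ite v _ (G.irrefl), hHam] at hv
    have : (lam • f) v = lam * f v := rfl
    rw [this] at hv
    linarith [hv]
  -- key eigenvalue equation for the restriction
  have key : ∀ c : P.ConnectedComponent,
      HP *ᵥ restrictComp P c f = lam • restrictComp P c f := by
    intro c
    funext v
    have hgval : ∀ u, restrictComp P c f u
        = if P.connectedComponentMk u = c then f u else 0 := fun u => rfl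
    have hoffsum : ∑ u ∈ Finset.univ.erase v, HP v u * restrictComp P c f u
        = -∑ u ∈ Finset.univ.filter (fun u => P.Adj v u), restrictComp P c f u := by
      have hcongr : ∀ u ∈ Finset.univ.erase v, HP v u * restrictComp P c f u
          = (if P.Adj v u then (-1:ℝ) else 0) * restrictComp P c f u := by
        intro u hu
        rw [hHPoff v u (Finset.ne_of_mem_erase hu).symm]
      rw [Finset.sum_congr rfl hcongr, erase_sum_ite v _ (P.irrefl)]
    have hsmul : (lam • restrictComp P c f) v = lam * restrictComp P c f v := rfl
    rw [mulVec_point, hoffsum, hsmul]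
    by_cases hc : P.connectedComponentMk v = c
    · have hgv : restrictComp P c f v = f v := by rw [hgval, if_pos hc]
      have hnb : ∀ u ∈ Finset.univ.filter (fun u => P.Adj v u), restrictComp P c f u = f u := by
        intro u hu
        have hadj := (Finset.mem_filter.mp hu).2
        have hcu : P.connectedComponentMk u = c := by
          rw [← hc]
          exact (SimpleGraph.ConnectedComponent.sound hadj.reachable).symm
        rw [hgval, if_pos hcu]
      rw [Finset.sum_congr rfl hnb, hgv, hdiag v]
      have hpart : ∑ u ∈ Finset.univ.filter (fun u => G.Adj v u), f u
          = ∑ u ∈ Finset.univ.filter (fun u => G.Adj v u ∧ f v * f u < 0), f u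
            + ∑ u ∈ Finset.univ.filter (fun u => P.Adj v u), f u := by
        rw [← Finset.sum_filter_add_sum_filter_not
          (Finset.univ.filter (fun u => G.Adj v u)) (fun u => f v * f u < 0) f]
        congr 1
        · rw [Finset.filter_filter]
        · rw [Finset.filter_filter]
          apply Finset.sum_congr _ (fun _ _ => rfl)
          apply Finset.filter_congr
          intro u _
          constructor
          · rintro ⟨hadj, hnlt⟩
            refine (hPadj v u).mpr ⟨hadj, ?_⟩
            rcases lt_trichotomy (f v * f u) 0 with h | h | h
            · exact absurd h hnlt
            · exact absurd h (mul_ne_zero (hnz v) (hnz u))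
            · exact h
          · intro hadj
            obtain ⟨hGa, hpos⟩ := (hPadj v u).mp hadj
            exact ⟨hGa, by linarith⟩
      have := hlamv v
      linarith [this, hpart]
    · have hgv : restrictComp P c f v = 0 := by rw [hgval, if_neg hc]
      have hnb : ∀ u ∈ Finset.univ.filter (fun u => P.Adj v u), restrictComp P c f u = 0 := by
        intro u hu
        have hadj := (Finset.mem_filter.mp hu).2
        have hcu : P.connectedComponentMk u ≠ c := by
          rw [← SimpleGraph.ConnectedComponent.sound hadj.reachable]
          exact hc
        rw [hgval, if_neg hcu]
      rw [Finset.sum_eq_zero hnb, hgv]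
      ring
  -- assemble the conclusion
  refine ⟨halpha, fun c => ?_⟩
  obtain ⟨v0, hv0⟩ := c.exists_rep
  have hv0c : P.connectedComponentMk v0 = c := hv0
  have hne : restrictComp P c f ≠ 0 := by
    intro h0
    have h1 : restrictComp P c f v0 = 0 := by rw [h0]; rfl
    rw [show restrictComp P c f v0 = f v0 from by
      simp [restrictComp, hv0c]] at h1
    exact hnz v0 h1
  refine ⟨hne, key c, ?_⟩
  -- lowest eigenvalue of the block
  have hoffall : ∀ i j : Fin V, i ≠ j → HP i j ≤ 0 := by
    intro i j hij
    rw [hHPoff i j hij]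
    split_ifs <;> norm_num
  set sg : ℝ := if 0 < f v0 then 1 else -1 with hsg
  have hsgf : ∀ v, P.connectedComponentMk v = c → 0 < sg * f v := by
    intro v hvc
    have hprod : 0 < f v * f v0 := hsign v v0 (hvc.trans hv0c.symm)
    rw [hsg]
    split_ifs with hpos
    · nlinarith
    · have hneg : f v0 < 0 := lt_of_le_of_ne (not_lt.mp hpos) (hnz v0)
      nlinarith
  have hrw : (fun u => sg * restrictComp P c f u) = sg • restrictComp P c f := rfl
  refine lam1Block_eq hHP P c hoffall lam (fun u => sg * restrictComp P c f u) ?_ ?_ ?_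
  · intro v hvc
    show 0 < sg * restrictComp P c f v
    rw [show restrictComp P c f v = f v from by simp [restrictComp, hvc]]
    exact hsgf v hvc
  · intro v hvc
    show sg * restrictComp P c f v = 0
    rw [show restrictComp P c f v = 0 from by simp [restrictComp, hvc], mul_zero]
  · rw [hrw, Matrix.mulVec_smul, key c, smul_comm]
end

section
/- Let T be a finite tree (a finite, simple, connected graph with β(T) = 0), let H(T) = −A(T) + Q be a discrete Schrödinger operator on T, and let f^{(n)} be a non-degenerate eigenvector of H(T) corresponding to its n-th eigenvalue. Then f^{(n)} is Courant sharp: the number of its nodal domains is ν_n = n, and the number of edges across which it changes sign is φ_n = n − 1. -/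
open Matrix

/-- The spanning subgraph of `G` retaining exactly the edges `(a,b)` with `f a * f b > 0`.
Its connected components are the nodal domains of `f`. -/
def posSub {V : ℕ} (G : SimpleGraph (Fin V)) (f : Fin V → ℝ) : SimpleGraph (Fin V) where
  Adj a b := G.Adj a b ∧ 0 < f a * f b
  symm := ⟨fun a b h => ⟨h.1.symm, by rw [mul_comm]; exact h.2⟩⟩
  loopless := ⟨fun a h => G.irrefl h.1⟩

/-- `ν(G;f)`: the number of nodal domains of `f` on `G`. -/
noncomputable def nodalCount {V : ℕ} (G : SimpleGraph (Fin V)) (f : Fin V → ℝ) : ℕ :=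
  Nat.card (posSub G f).ConnectedComponent

/-- `φ(G;f)`: the number of edges of `G` along which `f` changes sign. -/
noncomputable def flipCount {V : ℕ} (G : SimpleGraph (Fin V)) (f : Fin V → ℝ) : ℕ :=
  {e ∈ G.edgeSet | ∃ a b, e = s(a, b) ∧ f a * f b < 0}.ncard

/-- The number of vertices of the connected component `c` of the graph `H`. -/
noncomputable def compVerts {V : ℕ} (H : SimpleGraph (Fin V)) (c : H.ConnectedComponent) : ℕ :=
  Nat.card {v : Fin V // H.connectedComponentMk v = c}

/-- The number of edges of the connected component `c` of the graph `H`. -/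
noncomputable def compEdges {V : ℕ} (H : SimpleGraph (Fin V)) (c : H.ConnectedComponent) : ℕ :=
  {e ∈ H.edgeSet | ∀ v ∈ e, H.connectedComponentMk v = c}.ncard

/-- `ℓ(G;f)`: the sum over the nodal domains of `f` of their first Betti numbers
`E_k - V_k + 1`, i.e. the number of independent cycles on which `f` has constant sign. -/
noncomputable def cycleCount {V : ℕ} (G : SimpleGraph (Fin V)) (f : Fin V → ℝ) : ℕ :=
  ∑ᶠ c : (posSub G f).ConnectedComponent,
    (compEdges (posSub G f) c + 1 - compVerts (posSub G f) c)

section FiedlerAux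

/-- rank-nullity bound -/
lemma aux_finrank_ker_ge {V : ℕ} {M : Type} [AddCommGroup M] [Module ℝ M]
    [FiniteDimensional ℝ M] (L : (Fin V → ℝ) →ₗ[ℝ] M) :
    V ≤ Module.finrank ℝ (LinearMap.ker L) + Module.finrank ℝ M := by
  have h := LinearMap.finrank_range_add_finrank_ker L
  have h2 : Module.finrank ℝ (LinearMap.range L) ≤ Module.finrank ℝ M :=
    Submodule.finrank_le _
  have h3 : Module.finrank ℝ (Fin V → ℝ) = V := by simp
  omega

lemma aux_disjoint_dims {V : ℕ} (Q : (Fin V → ℝ) → ℝ) (W₁ W₂ : Submodule ℝ (Fin V → ℝ))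
    (h₁ : ∀ x ∈ W₁, x ≠ 0 → Q x < 0) (h₂ : ∀ x ∈ W₂, 0 ≤ Q x) :
    Module.finrank ℝ W₁ + Module.finrank ℝ W₂ ≤ V := by
  have hd : W₁ ⊓ W₂ = ⊥ := by
    rw [Submodule.eq_bot_iff]
    intro x hx
    by_contra hne
    exact absurd (h₂ x hx.2) (not_le.mpr (h₁ x hx.1 hne))
  have h := Submodule.finrank_sup_add_finrank_inf_eq W₁ W₂
  rw [hd] at h
  have h4 : Module.finrank ℝ ↥(W₁ ⊔ W₂) ≤ Module.finrank ℝ (Fin V → ℝ) := Submodule.finrank_le _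
  have h3 : Module.finrank ℝ (Fin V → ℝ) = V := by simp
  simp only [finrank_bot] at h
  omega

lemma aux_sym2_mk_out {α : Type*} (e : Sym2 α) : s(e.out.1, e.out.2) = e := by
  conv_rhs => rw [← e.out_eq]

lemma aux_sym2_out (α : Type*) (a b : α) : (s(a,b)).out = (a,b) ∨ (s(a,b)).out = (b,a) := by
  have h : s(s(a,b).out.1, s(a,b).out.2) = s(a,b) := aux_sym2_mk_out _
  rcases Sym2.eq_iff.mp h with ⟨h1, h2⟩ | ⟨h1, h2⟩
  · left; exact Prod.ext h1 h2
  · right; exact Prod.ext h1 h2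

lemma aux_card_lt_fin {V : ℕ} (n : Fin V) : Fintype.card {k : Fin V // k < n} = n := by
  rw [Fintype.card_subtype]
  have : Finset.filter (fun k => k < n) Finset.univ = Finset.Iio n := by
    ext k; simp
  rw [this, Fin.card_Iio]

lemma aux_dot_sum {V : ℕ} (x : Fin V → ℝ) (g : Fin V → Fin V → ℝ) :
    x ⬝ᵥ (∑ i, g i) = ∑ i, x ⬝ᵥ (g i) := by
  simp only [dotProduct, Finset.sum_apply, Finset.mul_sum]
  exact Finset.sum_comm

lemma aux_mulVec_sum {V : ℕ} (M : Matrix (Fin V) (Fin V) ℝ) (g : Fin V → Fin V → ℝ) :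
    M *ᵥ (∑ i, g i) = ∑ i, M *ᵥ g i := by
  funext v
  simp only [mulVec, dotProduct, Finset.sum_apply, Finset.mul_sum]
  exact Finset.sum_comm

/-- first endpoint of an edge -/
noncomputable def eFst {V : ℕ} {T : SimpleGraph (Fin V)} (e : ↥T.edgeSet) : Fin V := e.1.out.1

/-- second endpoint of an edge -/
noncomputable def eSnd {V : ℕ} {T : SimpleGraph (Fin V)} (e : ↥T.edgeSet) : Fin V := e.1.out.2

lemma eAdj {V : ℕ} {T : SimpleGraph (Fin V)} (e : ↥T.edgeSet) : T.Adj (eFst e) (eSnd e) := by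
  have h : s(eFst e, eSnd e) = e.1 := aux_sym2_mk_out _
  have he := e.2
  rw [← h] at he
  exact (SimpleGraph.mem_edgeSet T).mp he

/-- endpoints of the edge of an adjacent pair, applied through any function -/
lemma ePair {V : ℕ} {T : SimpleGraph (Fin V)} {a b : Fin V} (hab : T.Adj a b)
    {γ : Type*} (g : Fin V → Fin V → γ) (hg : ∀ u v, g u v = g v u) :
    g (eFst ⟨s(a,b), (T.mem_edgeSet).mpr hab⟩) (eSnd ⟨s(a,b), (T.mem_edgeSet).mpr hab⟩)
      = g a b := by
  rcases aux_sym2_out (Fin V) a b with h | h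
  · simp only [eFst, eSnd, h]
  · simp only [eFst, eSnd, h]
    exact hg b a

/-- weight of an edge -/
noncomputable def wFun {V : ℕ} {T : SimpleGraph (Fin V)} (f : Fin V → ℝ) (e : ↥T.edgeSet) : ℝ :=
  f (eFst e) * f (eSnd e)

/-- the difference map along edges -/
noncomputable def betaMap {V : ℕ} (T : SimpleGraph (Fin V)) :
    (Fin V → ℝ) →ₗ[ℝ] (↥T.edgeSet → ℝ) where
  toFun y := fun e => y (eFst e) - y (eSnd e)
  map_add' := by intros y z; funext e; simp [Pi.add_apply]; ring
  map_smul' := by intros c y; funext e; simp [Pi.smul_apply, smul_eq_mul]; ring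

/-- restriction to a subset of coordinates -/
def restrMap {ι : Type*} (p : ι → Prop) : (ι → ℝ) →ₗ[ℝ] ({i // p i} → ℝ) where
  toFun z := fun i => z i.1
  map_add' := fun _ _ => rfl
  map_smul' := fun _ _ => rfl

/-- coordinatewise multiplication by a nonvanishing function, as a linear equivalence -/
noncomputable def mulFequiv {V : ℕ} (f : Fin V → ℝ) (hnz : ∀ v, f v ≠ 0) :
    (Fin V → ℝ) ≃ₗ[ℝ] (Fin V → ℝ) :=
  LinearEquiv.ofLinear
    { toFun := fun y v => f v * y v
      map_add' := by intros; funext v; simp [Pi.add_apply]; ring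
      map_smul' := by intros; funext v; simp [Pi.smul_apply, smul_eq_mul]; ring }
    { toFun := fun x v => x v / f v
      map_add' := by intros; funext v; simp [Pi.add_apply]; ring
      map_smul' := by intros; funext v; simp [Pi.smul_apply, smul_eq_mul]; ring }
    (by
      refine LinearMap.ext fun x => funext fun v => ?_
      show f v * (x v / f v) = x v
      rw [mul_comm]
      exact div_mul_cancel₀ (x v) (hnz v))
    (by
      refine LinearMap.ext fun y => funext fun v => ?_
      show (f v * y v) / f v = y v
      exact mul_div_cancel_left₀ (y v) (hnz v))

/-- coordinates in a family of vectors, via dot products -/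
noncomputable def ccMap {V : ℕ} (u : Fin V → (Fin V → ℝ)) :
    (Fin V → ℝ) →ₗ[ℝ] (Fin V → ℝ) where
  toFun x := fun i => u i ⬝ᵥ x
  map_add' := by intros; funext i; simp [dotProduct_add]
  map_smul' := by intros; funext i; simp [dotProduct_smul]

/-- evaluation of functions on components at the component of each vertex -/
def evComp {V : ℕ} (Hg : SimpleGraph (Fin V)) :
    (Hg.ConnectedComponent → ℝ) →ₗ[ℝ] (Fin V → ℝ) where
  toFun c := fun v => c (Hg.connectedComponentMk v)
  map_add' := fun _ _ => rfl
  map_smul' := fun _ _ => rfl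

end FiedlerAux

/-- **Fiedler / discrete Sturm.** On a finite tree `T` (connected with
`E = V - 1`), every non-degenerate eigenvector `f⁽ⁿ⁾` of a discrete Schrödinger operator is
Courant sharp: `ν_n = n` and `φ_n = n - 1` (`1`-based; here `n = (n₀ : ℕ) + 1` with
`n₀ : Fin V` a `0`-based position). -/
theorem stmt_18 {V : ℕ} (T : SimpleGraph (Fin V)) (hconn : T.Connected)
    (htree : T.edgeSet.ncard + 1 = V) (q : Fin V → ℝ)
    (f : Fin V → ℝ) (n : Fin V)
    (heig : Ham T q *ᵥ f = sortedEigs (Ham_isHermitian T q) n • f)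
    (hnz : ∀ v, f v ≠ 0)
    (hsimple : ∀ k : Fin V,
      sortedEigs (Ham_isHermitian T q) k = sortedEigs (Ham_isHermitian T q) n → k = n) :
    nodalCount T f = (n : ℕ) + 1 ∧ flipCount T f = (n : ℕ) := by
  classical
  have hH := Ham_isHermitian T q
  set lam := sortedEigs (Ham_isHermitian T q) n with hlamdef
  letI : Fintype ↥T.edgeSet := (Set.toFinite T.edgeSet).fintype
  have hV : 0 < V := Fin.pos_iff_nonempty.mpr hconn.nonempty
  set v₀ : Fin V := ⟨0, hV⟩ with hv0def
  have hcard_edges : Fintype.card ↥T.edgeSet = V - 1 := by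
    have h1 : Nat.card ↥T.edgeSet = T.edgeSet.ncard := Nat.card_coe_set_eq _
    rw [← Nat.card_eq_fintype_card, h1]; omega
  set Qf : (Fin V → ℝ) → ℝ := fun x => x ⬝ᵥ (Ham T q *ᵥ x) - lam * (x ⬝ᵥ x) with hQfdef
  -- connectivity transport
  have hconst : ∀ (g : Fin V → ℝ), (∀ a b, T.Adj a b → g a = g b) → ∀ u v : Fin V, g u = g v := by
    intro g hg u v
    obtain ⟨p⟩ := hconn.preconnected u v
    induction p with
    | nil => rfl
    | cons h p ih => exact (hg _ _ h).trans ih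
  -- mulVec of Ham
  have hmv : ∀ (x : Fin V → ℝ) a,
      (Ham T q *ᵥ x) a = q a * x a - ∑ b, (if T.Adj a b then x b else 0) := by
    intro x a
    have hent : ∀ b, Ham T q a b
        = (if a = b then q a else 0) + (if T.Adj a b then (-1:ℝ) else 0) := by
      intro b
      by_cases h : a = b
      · subst h; simp [Ham, T.irrefl]
      · simp [Ham, h]
    simp only [mulVec, dotProduct]
    calc ∑ b, Ham T q a b * x b
        = ∑ b, ((if a = b then q a * x b else 0) + (if T.Adj a b then -x b else 0)) := by
          refine Finset.sum_congr rfl fun b _ => ?_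
          rw [hent b]
          by_cases h1 : a = b <;> by_cases h2 : T.Adj a b <;> simp [h1, h2] <;> ring
      _ = q a * x a - ∑ b, (if T.Adj a b then x b else 0) := by
          rw [Finset.sum_add_distrib, sub_eq_add_neg]
          congr 1
          · simp
          · rw [← Finset.sum_neg_distrib]
            exact Finset.sum_congr rfl fun b _ => by by_cases h2 : T.Adj a b <;> simp [h2]
  have heigA : ∀ a, ∑ b, (if T.Adj a b then f b else 0) = (q a - lam) * f a := by
    intro a
    have h := congrFun heig a
    rw [hmv] at h
    simp only [Pi.smul_apply, smul_eq_mul] at h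
    linarith
  have hQ1 : ∀ x, Qf x = ∑ a, ∑ b,
      (if T.Adj a b then f b * x a^2 / f a - x a * x b else 0) := by
    intro x
    have key : ∀ a, x a * ((Ham T q *ᵥ x) a) - lam * (x a * x a)
        = ∑ b, (if T.Adj a b then f b * x a^2 / f a - x a * x b else 0) := by
      intro a
      have hfa := hnz a
      have hS := heigA a
      have hrhs : ∑ b, (if T.Adj a b then f b * x a^2 / f a - x a * x b else 0)
          = (∑ b, (if T.Adj a b then f b else 0)) * (x a^2 / f a)
            - x a * ∑ b, (if T.Adj a b then x b else 0) := by
        rw [Finset.sum_mul, Finset.mul_sum, ← Finset.sum_sub_distrib]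
        refine Finset.sum_congr rfl fun b _ => ?_
        by_cases hab : T.Adj a b
        · simp only [hab, if_true]; ring
        · simp [hab]
      rw [hrhs, hS, hmv]
      field_simp
      ring
    simp only [hQfdef]
    simp only [dotProduct]
    rw [Finset.mul_sum, ← Finset.sum_sub_distrib]
    exact Finset.sum_congr rfl fun a _ => key a
  have hQid : ∀ x, 2 * Qf x = ∑ a, ∑ b,
      (if T.Adj a b then f a * f b * (x a / f a - x b / f b)^2 else 0) := by
    intro x
    have h1 := hQ1 x
    have hpt : ∀ a b,
        (if T.Adj a b then f a * f b * (x a / f a - x b / f b)^2 else 0)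
          + (if T.Adj b a then f b * f a * (x b / f b - x a / f a)^2 else 0)
        = 2 * ((if T.Adj a b then f b * x a^2 / f a - x a * x b else 0)
          + (if T.Adj b a then f a * x b^2 / f b - x b * x a else 0)) := by
      intro a b
      by_cases hab : T.Adj a b
      · have hba : T.Adj b a := hab.symm
        simp only [hab, hba, if_true]
        have hfa := hnz a
        have hfb := hnz b
        field_simp
        ring
      · have hba : ¬ T.Adj b a := fun h => hab h.symm
        simp [hab, hba]
    have hsum : ∑ a, ∑ b,
        ((if T.Adj a b then f a * f b * (x a / f a - x b / f b)^2 else 0)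
          + (if T.Adj b a then f b * f a * (x b / f b - x a / f a)^2 else 0))
        = ∑ a, ∑ b, 2 * ((if T.Adj a b then f b * x a^2 / f a - x a * x b else 0)
          + (if T.Adj b a then f a * x b^2 / f b - x b * x a else 0)) :=
      Finset.sum_congr rfl fun a _ => Finset.sum_congr rfl fun b _ => hpt a b
    have hswap2 : ∑ (a : Fin V), ∑ (b : Fin V),
        (if T.Adj b a then f b * f a * (x b / f b - x a / f a)^2 else 0)
        = ∑ (a : Fin V), ∑ (b : Fin V),
          (if T.Adj a b then f a * f b * (x a / f a - x b / f b)^2 else 0) :=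
      Finset.sum_comm
    have hswap1 : ∑ (a : Fin V), ∑ (b : Fin V),
        (if T.Adj b a then f a * x b^2 / f b - x b * x a else 0)
        = ∑ (a : Fin V), ∑ (b : Fin V),
          (if T.Adj a b then f b * x a^2 / f a - x a * x b else 0) :=
      Finset.sum_comm
    have e1 : ∑ (a : Fin V), ∑ (b : Fin V),
        ((if T.Adj a b then f a * f b * (x a / f a - x b / f b)^2 else 0)
          + (if T.Adj b a then f b * f a * (x b / f b - x a / f a)^2 else 0))
        = (∑ (a : Fin V), ∑ (b : Fin V),
            (if T.Adj a b then f a * f b * (x a / f a - x b / f b)^2 else 0))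
          + (∑ (a : Fin V), ∑ (b : Fin V),
            (if T.Adj b a then f b * f a * (x b / f b - x a / f a)^2 else 0)) := by
      simp only [Finset.sum_add_distrib]
    have e2 : ∑ (a : Fin V), ∑ (b : Fin V),
        (2 * ((if T.Adj a b then f b * x a^2 / f a - x a * x b else 0)
          + (if T.Adj b a then f a * x b^2 / f b - x b * x a else 0)))
        = 2 * ((∑ (a : Fin V), ∑ (b : Fin V),
            (if T.Adj a b then f b * x a^2 / f a - x a * x b else 0))
          + (∑ (a : Fin V), ∑ (b : Fin V),
            (if T.Adj b a then f a * x b^2 / f b - x b * x a else 0))) := by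
      simp only [Finset.sum_add_distrib, Finset.mul_sum, mul_add]
    rw [e1, e2, hswap1, hswap2] at hsum
    linarith [hsum, h1]
  have hQnonneg : ∀ x, (∀ a b, T.Adj a b → f a * f b < 0 → x a / f a = x b / f b) →
      0 ≤ Qf x := by
    intro x hx
    have h2 : 0 ≤ 2 * Qf x := by
      rw [hQid]
      refine Finset.sum_nonneg fun a _ => Finset.sum_nonneg fun b _ => ?_
      by_cases hab : T.Adj a b
      · simp only [hab, if_true]
        rcases lt_trichotomy (f a * f b) 0 with h | h | h
        · rw [hx a b hab h]
          simp
        · exact absurd h (mul_ne_zero (hnz a) (hnz b))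
        · exact mul_nonneg h.le (sq_nonneg _)
      · simp [hab]
    linarith
  have hQneg : ∀ x, (∀ a b, T.Adj a b → 0 < f a * f b → x a / f a = x b / f b) →
      (∃ a b, T.Adj a b ∧ x a / f a ≠ x b / f b) → Qf x < 0 := by
    rintro x hx ⟨a0, b0, hab0, hne0⟩
    have hterm : ∀ a b, (if T.Adj a b then f a * f b * (x a / f a - x b / f b)^2 else 0) ≤ 0 := by
      intro a b
      by_cases hab : T.Adj a b
      · simp only [hab, if_true]
        rcases lt_trichotomy (f a * f b) 0 with h | h | h
        · exact mul_nonpos_of_nonpos_of_nonneg h.le (sq_nonneg _)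
        · exact absurd h (mul_ne_zero (hnz a) (hnz b))
        · rw [hx a b hab h]
          simp
      · simp [hab]
    have hneg0 : f a0 * f b0 < 0 := by
      rcases lt_trichotomy (f a0 * f b0) 0 with h | h | h
      · exact h
      · exact absurd h (mul_ne_zero (hnz a0) (hnz b0))
      · exact absurd (hx a0 b0 hab0 h) hne0
    have hterm0 : (if T.Adj a0 b0 then f a0 * f b0 * (x a0 / f a0 - x b0 / f b0)^2 else 0) < 0 := by
      simp only [hab0, if_true]
      apply mul_neg_of_neg_of_pos hneg0
      have := sub_ne_zero_of_ne hne0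
      positivity
    have h2 : 2 * Qf x < 0 := by
      rw [hQid]
      have hlt : ∑ a, ∑ b, (if T.Adj a b then f a * f b * (x a / f a - x b / f b)^2 else 0)
          < ∑ (_ : Fin V), (0:ℝ) := by
        refine Finset.sum_lt_sum (fun a _ => Finset.sum_nonpos fun b _ => hterm a b)
          ⟨a0, Finset.mem_univ _, ?_⟩
        have hin : ∑ b, (if T.Adj a0 b then f a0 * f b * (x a0 / f a0 - x b / f b)^2 else 0)
            < 0 := by
          have h3 : ∑ b, (if T.Adj a0 b then f a0 * f b * (x a0 / f a0 - x b / f b)^2 else 0)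
              < ∑ (_ : Fin V), (0:ℝ) :=
            Finset.sum_lt_sum (fun b _ => hterm a0 b) ⟨b0, Finset.mem_univ _, hterm0⟩
          simpa using h3
        simpa using hin
      simpa using hlt
    linarith
  -- edge weights
  have hwne : ∀ e : ↥T.edgeSet, wFun f e ≠ 0 := fun e => mul_ne_zero (hnz _) (hnz _)
  have hwpair : ∀ (a b : Fin V) (hab : T.Adj a b),
      wFun f (⟨s(a,b), (T.mem_edgeSet).mpr hab⟩ : ↥T.edgeSet) = f a * f b := by
    intro a b hab
    exact ePair hab (fun u v => f u * f v) (fun u v => mul_comm _ _)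
  have hpairdiff : ∀ (g : Fin V → ℝ) (a b : Fin V) (hab : T.Adj a b),
      g (eFst (⟨s(a,b), (T.mem_edgeSet).mpr hab⟩ : ↥T.edgeSet)) =
        g (eSnd (⟨s(a,b), (T.mem_edgeSet).mpr hab⟩ : ↥T.edgeSet)) → g a = g b := by
    intro g a b hab h
    rcases aux_sym2_out (Fin V) a b with h' | h'
    · simpa only [eFst, eSnd, h'] using h
    · exact (by simpa only [eFst, eSnd, h'] using h : g b = g a).symm
  -- spectral setup
  set u : Fin V → (Fin V → ℝ) := fun i => ⇑(hH.eigenvectorBasis i) with hudef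
  set μ : Fin V → ℝ := hH.eigenvalues with hμdef
  have horth : ∀ i j, u i ⬝ᵥ u j = if i = j then 1 else 0 := by
    intro i j
    have h := hH.eigenvectorBasis.orthonormal
    rw [orthonormal_iff_ite] at h
    have h2 := h i j
    rw [← h2, PiLp.inner_apply]
    simp [dotProduct, mul_comm]
    rfl
  have hmveig : ∀ i, Ham T q *ᵥ u i = μ i • u i := fun i => hH.mulVec_eigenvectorBasis i
  have hexp : ∀ x : Fin V → ℝ, x = ∑ i, (u i ⬝ᵥ x) • u i := by
    intro x
    have h2 : ∀ i, hH.eigenvectorBasis.repr (WithLp.toLp 2 x) i = u i ⬝ᵥ x := by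
      intro i
      rw [hH.eigenvectorBasis.repr_apply_apply, PiLp.inner_apply]
      simp [dotProduct]
      exact Finset.sum_congr rfl fun _ _ => mul_comm _ _
    have h : (∑ i, hH.eigenvectorBasis.repr (WithLp.toLp 2 x) i • hH.eigenvectorBasis i
        : EuclideanSpace ℝ (Fin V)) = WithLp.toLp 2 x :=
      hH.eigenvectorBasis.sum_repr (WithLp.toLp 2 x)
    have h4 : ∑ i, (hH.eigenvectorBasis.repr (WithLp.toLp 2 x) i) • (u i : Fin V → ℝ) = x := by
      have h5 := congrArg WithLp.ofLp h
      simpa [u] using h5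
    conv_lhs => rw [← h4]
    exact Finset.sum_congr rfl fun i _ => by rw [h2]
  have hQspec : ∀ x, Qf x = ∑ i, (μ i - lam) * (u i ⬝ᵥ x)^2 := by
    intro x
    have hx := hexp x
    have hHx : Ham T q *ᵥ x = ∑ i, ((u i ⬝ᵥ x) * μ i) • u i := by
      conv_lhs => rw [hx]
      rw [aux_mulVec_sum]
      refine Finset.sum_congr rfl fun i _ => ?_
      rw [mulVec_smul, hmveig i, smul_smul]
    have hdot1 : x ⬝ᵥ (Ham T q *ᵥ x) = ∑ i, μ i * (u i ⬝ᵥ x)^2 := by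
      rw [hHx, aux_dot_sum]
      refine Finset.sum_congr rfl fun i _ => ?_
      rw [dotProduct_smul, dotProduct_comm]
      simp only [smul_eq_mul]
      ring
    have hdot2 : x ⬝ᵥ x = ∑ i, (u i ⬝ᵥ x)^2 := by
      nth_rewrite 2 [hx]
      rw [aux_dot_sum]
      refine Finset.sum_congr rfl fun i _ => ?_
      rw [dotProduct_smul, dotProduct_comm]
      simp only [smul_eq_mul]
      ring
    simp only [hQfdef]
    rw [hdot1, hdot2, Finset.mul_sum, ← Finset.sum_sub_distrib]
    exact Finset.sum_congr rfl fun i _ => by ring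
  have hx0 : ∀ x : Fin V → ℝ, (∀ i, u i ⬝ᵥ x = 0) → x = 0 := by
    intro x h
    have := hexp x
    rw [this]
    simp [h]
  have hcardS : Fintype.card {i : Fin V // μ i < lam} = (n : ℕ) := by
    have hmono : Monotone (μ ∘ Tuple.sort μ) := Tuple.monotone_sort μ
    have hlt : ∀ k : Fin V, μ (Tuple.sort μ k) < lam ↔ k < n := by
      intro k
      constructor
      · intro h
        by_contra hk
        push_neg at hk
        exact absurd (hmono hk) (not_le.mpr h)
      · intro h
        have hle : μ (Tuple.sort μ k) ≤ lam := hmono h.le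
        rcases eq_or_lt_of_le hle with heq | hlt2
        · exact absurd (hsimple k heq) h.ne
        · exact hlt2
    have he1 : Fintype.card {i : Fin V // μ i < lam}
        = Fintype.card {k : Fin V // μ (Tuple.sort μ k) < lam} :=
      (Fintype.card_congr (Equiv.subtypeEquiv (Tuple.sort μ) (fun k => Iff.rfl))).symm
    rw [he1]
    rw [Fintype.card_congr (Equiv.subtypeEquivRight hlt)]
    exact aux_card_lt_fin n
  -- counting
  set φn := Fintype.card {e : ↥T.edgeSet // wFun f e < 0} with hφdef
  have hφle : φn ≤ V - 1 := hcard_edges ▸ Fintype.card_subtype_le _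
  -- spectral negative subspace W1
  set W1 := LinearMap.ker ((restrMap (fun i : Fin V => ¬ μ i < lam)) ∘ₗ ccMap u) with hW1def
  have hW1rank : (n : ℕ) ≤ Module.finrank ℝ W1 := by
    have h := aux_finrank_ker_ge ((restrMap (fun i : Fin V => ¬ μ i < lam)) ∘ₗ ccMap u)
    rw [← hW1def] at h
    have hc : Module.finrank ℝ ({i : Fin V // ¬ μ i < lam} → ℝ)
        = Fintype.card {i : Fin V // ¬ μ i < lam} := by simp
    have hc2 : Fintype.card {i : Fin V // ¬ μ i < lam} = V - (n:ℕ) := by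
      rw [Fintype.card_subtype_compl, hcardS]
      simp
    have hn : (n:ℕ) < V := n.2
    rw [hc, hc2] at h
    omega
  have hW1mem : ∀ x ∈ W1, ∀ i : Fin V, ¬ μ i < lam → u i ⬝ᵥ x = 0 := by
    intro x hx i hi
    exact congrFun (LinearMap.mem_ker.mp hx) ⟨i, hi⟩
  have hW1neg : ∀ x ∈ W1, x ≠ 0 → Qf x < 0 := by
    intro x hx hxne
    obtain ⟨i0, hi0⟩ : ∃ i, u i ⬝ᵥ x ≠ 0 := by
      by_contra hc
      push_neg at hc
      exact hxne (hx0 x hc)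
    have hi0lt : μ i0 < lam := by
      by_contra hc
      exact hi0 (hW1mem x hx i0 hc)
    rw [hQspec]
    have hterm : ∀ i, (μ i - lam) * (u i ⬝ᵥ x)^2 ≤ 0 := by
      intro i
      by_cases h : μ i < lam
      · exact mul_nonpos_of_nonpos_of_nonneg (by linarith) (sq_nonneg _)
      · rw [hW1mem x hx i h]
        simp
    have h3 : ∑ i, (μ i - lam) * (u i ⬝ᵥ x)^2 < ∑ (_ : Fin V), (0:ℝ) :=
      Finset.sum_lt_sum (fun i _ => hterm i)
        ⟨i0, Finset.mem_univ _, mul_neg_of_neg_of_pos (by linarith) (by positivity)⟩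
    simpa using h3
  -- spectral nonnegative subspace W4
  set W4 := LinearMap.ker ((restrMap (fun i : Fin V => μ i < lam)) ∘ₗ ccMap u) with hW4def
  have hW4rank : V ≤ Module.finrank ℝ W4 + (n : ℕ) := by
    have h := aux_finrank_ker_ge ((restrMap (fun i : Fin V => μ i < lam)) ∘ₗ ccMap u)
    rw [← hW4def] at h
    have hc : Module.finrank ℝ ({i : Fin V // μ i < lam} → ℝ)
        = Fintype.card {i : Fin V // μ i < lam} := by simp
    rw [hc, hcardS] at h
    omega
  have hW4nonneg : ∀ x ∈ W4, 0 ≤ Qf x := by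
    intro x hx
    have hmem : ∀ i : Fin V, μ i < lam → u i ⬝ᵥ x = 0 := by
      intro i hi
      exact congrFun (LinearMap.mem_ker.mp hx) ⟨i, hi⟩
    rw [hQspec]
    refine Finset.sum_nonneg fun i _ => ?_
    by_cases h : μ i < lam
    · rw [hmem i h]
      simp
    · have := not_lt.mp h
      exact mul_nonneg (by linarith) (sq_nonneg _)
  -- combinatorial nonnegative subspace W2
  set divmap := ((mulFequiv f hnz).symm : (Fin V → ℝ) ≃ₗ[ℝ] (Fin V → ℝ)).toLinearMap with hdivdef
  set W2 := LinearMap.ker ((restrMap (fun e : ↥T.edgeSet => wFun f e < 0))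
      ∘ₗ (betaMap T ∘ₗ divmap)) with hW2def
  have hW2rank : V ≤ Module.finrank ℝ W2 + φn := by
    have h := aux_finrank_ker_ge ((restrMap (fun e : ↥T.edgeSet => wFun f e < 0))
      ∘ₗ (betaMap T ∘ₗ divmap))
    rw [← hW2def] at h
    have hc : Module.finrank ℝ ({e : ↥T.edgeSet // wFun f e < 0} → ℝ)
        = Fintype.card {e : ↥T.edgeSet // wFun f e < 0} := by simp
    rw [hc, ← hφdef] at h
    omega
  have hW2nonneg : ∀ x ∈ W2, 0 ≤ Qf x := by
    intro x hx
    apply hQnonneg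
    intro a b hab hneg
    have he : wFun f (⟨s(a,b), (T.mem_edgeSet).mpr hab⟩ : ↥T.edgeSet) < 0 := by
      rw [hwpair a b hab]
      exact hneg
    have h0 := congrFun (LinearMap.mem_ker.mp hx) ⟨⟨s(a,b), (T.mem_edgeSet).mpr hab⟩, he⟩
    exact hpairdiff (fun v => x v / f v) a b hab (sub_eq_zero.mp h0)
  -- combinatorial negative subspace W3
  set LK := LinearMap.prod ((restrMap (fun e : ↥T.edgeSet => 0 < wFun f e)) ∘ₗ betaMap T)
      (LinearMap.proj (R := ℝ) (φ := fun _ : Fin V => ℝ) v₀) with hLKdef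
  set K := LinearMap.ker LK with hKdef
  have hposcompl : Fintype.card {e : ↥T.edgeSet // 0 < wFun f e} = (V - 1) - φn := by
    have hiff : ∀ e : ↥T.edgeSet, 0 < wFun f e ↔ ¬ wFun f e < 0 := by
      intro e
      constructor
      · intro h
        exact not_lt.mpr h.le
      · intro h
        exact ((hwne e).lt_or_gt).resolve_left h
    rw [Fintype.card_congr (Equiv.subtypeEquivRight hiff), Fintype.card_subtype_compl,
      hcard_edges, ← hφdef]
  have hKrank : φn ≤ Module.finrank ℝ K := by
    have h := aux_finrank_ker_ge LK
    rw [← hKdef] at h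
    have hc : Module.finrank ℝ (({e : ↥T.edgeSet // 0 < wFun f e} → ℝ) × ℝ)
        = Fintype.card {e : ↥T.edgeSet // 0 < wFun f e} + 1 := by
      rw [Module.finrank_prod]
      simp
    rw [hc, hposcompl] at h
    omega
  set W3 := Submodule.map (mulFequiv f hnz).toLinearMap K with hW3def
  have hW3rank : φn ≤ Module.finrank ℝ W3 := by
    rw [hW3def, LinearEquiv.finrank_map_eq]
    exact hKrank
  have hW3neg : ∀ x ∈ W3, x ≠ 0 → Qf x < 0 := by
    intro x hx hxne
    obtain ⟨y, hyK, hyx⟩ := Submodule.mem_map.mp hx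
    have hxv : ∀ v, x v = f v * y v := fun v => (congrFun hyx v).symm
    have hLK0 := LinearMap.mem_ker.mp hyK
    have hyv0 : y v₀ = 0 := congrArg Prod.snd hLK0
    have hypos : ∀ a b, T.Adj a b → 0 < f a * f b → y a = y b := by
      intro a b hab hpos
      have he : 0 < wFun f (⟨s(a,b), (T.mem_edgeSet).mpr hab⟩ : ↥T.edgeSet) := by
        rw [hwpair a b hab]
        exact hpos
      have h0 := congrFun (congrArg Prod.fst hLK0) ⟨⟨s(a,b), (T.mem_edgeSet).mpr hab⟩, he⟩
      exact hpairdiff y a b hab (sub_eq_zero.mp h0)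
    have hyne : y ≠ 0 := by
      intro h
      apply hxne
      funext v
      rw [hxv v, congrFun h v]
      simp
    have hdiv : ∀ v, x v / f v = y v := by
      intro v
      rw [hxv v, mul_div_cancel_left₀ _ (hnz v)]
    apply hQneg
    · intro a b hab hpos
      rw [hdiv a, hdiv b]
      exact hypos a b hab hpos
    · by_contra hc
      push_neg at hc
      have hall : ∀ a b, T.Adj a b → y a = y b := by
        intro a b hab
        rw [← hdiv a, ← hdiv b]
        exact hc a b hab
      apply hyne
      funext v
      rw [hconst y hall v v₀, hyv0]
      rfl
  -- φn = n
  have hfn1 : (n : ℕ) ≤ φn := by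
    have hd := aux_disjoint_dims Qf W1 W2 hW1neg hW2nonneg
    omega
  have hfn2 : φn ≤ (n : ℕ) := by
    have hd := aux_disjoint_dims Qf W3 W4 hW3neg hW4nonneg
    omega
  have hφeq : φn = (n : ℕ) := le_antisymm hfn2 hfn1
  -- flip count
  have hflip : flipCount T f = φn := by
    unfold flipCount
    have hseteq : {e ∈ T.edgeSet | ∃ a b, e = s(a, b) ∧ f a * f b < 0}
        = {e : Sym2 (Fin V) | e ∈ T.edgeSet ∧ f e.out.1 * f e.out.2 < 0} := by
      ext e
      constructor
      · rintro ⟨he, a, b, rfl, hab⟩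
        refine ⟨he, ?_⟩
        rcases aux_sym2_out (Fin V) a b with h | h <;> rw [h]
        · exact hab
        · simpa [mul_comm] using hab
      · rintro ⟨he, hw⟩
        exact ⟨he, e.out.1, e.out.2, (aux_sym2_mk_out e).symm, hw⟩
    rw [hseteq, ← Nat.card_coe_set_eq]
    have he : ↥{e : Sym2 (Fin V) | e ∈ T.edgeSet ∧ f e.out.1 * f e.out.2 < 0}
        ≃ {e : ↥T.edgeSet // wFun f e < 0} :=
      (Equiv.subtypeSubtypeEquivSubtypeInter (· ∈ T.edgeSet)
        (fun e => f e.out.1 * f e.out.2 < 0)).symm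
    rw [Nat.card_congr he, Nat.card_eq_fintype_card]
  -- surjectivity of the difference map
  have hconstker : ∀ y, betaMap T y = 0 → ∀ v : Fin V, y v = y v₀ := by
    intro y hy v
    apply hconst y
    intro a b hab
    have h0 := congrFun hy (⟨s(a,b), (T.mem_edgeSet).mpr hab⟩ : ↥T.edgeSet)
    exact hpairdiff y a b hab (sub_eq_zero.mp h0)
  have hkerβ : Module.finrank ℝ (LinearMap.ker (betaMap T)) ≤ 1 := by
    have hinj : Function.Injective
        ((LinearMap.proj (R := ℝ) (φ := fun _ : Fin V => ℝ) v₀)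
          ∘ₗ (LinearMap.ker (betaMap T)).subtype) := by
      intro y z hyz
      apply Subtype.ext
      funext v
      rw [hconstker _ (LinearMap.mem_ker.mp y.2) v, hconstker _ (LinearMap.mem_ker.mp z.2) v]
      exact hyz
    have := LinearMap.finrank_le_finrank_of_injective hinj
    simpa using this
  have hrangeβ : LinearMap.range (betaMap T) = ⊤ := by
    apply Submodule.eq_top_of_finrank_eq
    have h := LinearMap.finrank_range_add_finrank_ker (betaMap T)
    have hdom : Module.finrank ℝ (Fin V → ℝ) = V := by simp
    rw [hdom] at h
    have hcod : Module.finrank ℝ (↥T.edgeSet → ℝ) = V - 1 := by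
      simp [hcard_edges]
    have hle : Module.finrank ℝ (LinearMap.range (betaMap T)) ≤ V - 1 :=
      hcod ▸ Submodule.finrank_le _
    rw [hcod]
    omega
  have hppβ : Function.Surjective
      ⇑((restrMap (fun e : ↥T.edgeSet => 0 < wFun f e)) ∘ₗ betaMap T) := by
    have h1 : Function.Surjective ⇑(betaMap T) := LinearMap.range_eq_top.mp hrangeβ
    have h2 : Function.Surjective ⇑(restrMap (ι := ↥T.edgeSet) (fun e => 0 < wFun f e)) := by
      intro t
      refine ⟨fun e => if h : 0 < wFun f e then t ⟨e, h⟩ else 0, ?_⟩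
      funext e'
      exact dif_pos e'.2
    rw [LinearMap.coe_comp]
    exact h2.comp h1
  have hkerpp : Module.finrank ℝ
      (LinearMap.ker ((restrMap (fun e : ↥T.edgeSet => 0 < wFun f e)) ∘ₗ betaMap T))
      = φn + 1 := by
    have h := LinearMap.finrank_range_add_finrank_ker
      ((restrMap (fun e : ↥T.edgeSet => 0 < wFun f e)) ∘ₗ betaMap T)
    rw [LinearMap.range_eq_top.mpr hppβ] at h
    have htop : Module.finrank ℝ
        (⊤ : Submodule ℝ ({e : ↥T.edgeSet // 0 < wFun f e} → ℝ)) = (V-1) - φn := by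
      rw [finrank_top]
      simp [hposcompl]
    have hdom : Module.finrank ℝ (Fin V → ℝ) = V := by simp
    rw [htop, hdom] at h
    omega
  -- nodal count
  letI : Fintype (posSub T f).ConnectedComponent := Fintype.ofFinite _
  have hrangeev : LinearMap.range (evComp (posSub T f))
      = LinearMap.ker ((restrMap (fun e : ↥T.edgeSet => 0 < wFun f e)) ∘ₗ betaMap T) := by
    ext y
    simp only [LinearMap.mem_range, LinearMap.mem_ker]
    constructor
    · rintro ⟨c, rfl⟩
      funext e
      show (evComp (posSub T f) c) (eFst e.1) - (evComp (posSub T f) c) (eSnd e.1) = (0 : ℝ)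
      have hadj : (posSub T f).Adj (eFst e.1) (eSnd e.1) :=
        show T.Adj (eFst e.1) (eSnd e.1) ∧ 0 < f (eFst e.1) * f (eSnd e.1) from ⟨eAdj e.1, e.2⟩
      have hmk : (posSub T f).connectedComponentMk (eFst e.1)
          = (posSub T f).connectedComponentMk (eSnd e.1) :=
        SimpleGraph.ConnectedComponent.sound hadj.reachable
      show c ((posSub T f).connectedComponentMk (eFst e.1))
          - c ((posSub T f).connectedComponentMk (eSnd e.1)) = (0 : ℝ)
      rw [hmk, sub_self]
    · intro hy
      have hyadj : ∀ a b, (posSub T f).Adj a b → y a = y b := by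
        intro a b hab
        obtain ⟨hT, hpos⟩ := (hab : T.Adj a b ∧ 0 < f a * f b)
        have he : 0 < wFun f (⟨s(a,b), (T.mem_edgeSet).mpr hT⟩ : ↥T.edgeSet) := by
          rw [hwpair a b hT]
          exact hpos
        have h0 := congrFun hy ⟨⟨s(a,b), (T.mem_edgeSet).mpr hT⟩, he⟩
        exact hpairdiff y a b hT (sub_eq_zero.mp h0)
      have hwalk : ∀ (v w : Fin V) (p : (posSub T f).Walk v w), y v = y w := by
        intro v w p
        induction p with
        | nil => rfl
        | cons h p ih => exact (hyadj _ _ h).trans ih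
      refine ⟨SimpleGraph.ConnectedComponent.lift y (fun v w p _ => hwalk v w p), ?_⟩
      funext v
      show SimpleGraph.ConnectedComponent.lift y (fun v w p _ => hwalk v w p)
          ((posSub T f).connectedComponentMk v) = y v
      exact SimpleGraph.ConnectedComponent.lift_mk
  have hevinj : Function.Injective ⇑(evComp (posSub T f)) := by
    intro c d hcd
    funext z
    induction z using SimpleGraph.ConnectedComponent.ind with
    | _ v => exact congrFun hcd v
  have hnodal : nodalCount T f = φn + 1 := by
    unfold nodalCount
    rw [Nat.card_eq_fintype_card]
    have h1 : Fintype.card (posSub T f).ConnectedComponent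
        = Module.finrank ℝ ((posSub T f).ConnectedComponent → ℝ) := by simp
    rw [h1, ← LinearMap.finrank_range_of_inj hevinj, hrangeev, hkerpp]
  exact ⟨by rw [hnodal, hφeq], by rw [hflip, hφeq]⟩
end
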